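/- Let 𝒜: ℝ → M_n(ℝ) be continuous with 𝒜(t)_{jk} ≥ 0 for j ≠ k and zero row sums for all t, and let Φ(t,T) be the fundamental solution of Ż = −𝒜(t) Z backward from time T (i.e., ∂_t Φ(t,T) = −𝒜(t)Φ(t,T), Φ(T,T) = I, for t ≤ T). Then Φ(t,T) has nonnegative entries, each row of Φ(t,T) sums to 1, and ‖Φ(t,T) W‖_∞ ≤ ‖W‖_∞ for all W ∈ ℝⁿ and t ≤ T. -/

import Mathlib

open Finset Set Filter Topology

/-- Maximum principle: a solution of the backward ODE `ż = -𝒜(t) z` with a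
Metzler zero-row-sum matrix that is nonnegative at time `T` is nonnegative at
any earlier time `t`. -/
private lemma key_nonneg {n : ℕ} (𝒜 : ℝ → Matrix (Fin n) (Fin n) ℝ)
    (hoff : ∀ t j k, j ≠ k → 0 ≤ 𝒜 t j k)
    (hrow : ∀ t j, ∑ l, 𝒜 t j l = 0)
    (z : ℝ → Fin n → ℝ)
    (hz : ∀ j t, HasDerivAt (fun s => z s j) (-(∑ l, 𝒜 t j l * z t l)) t)
    {t T : ℝ} (ht : t ≤ T) (hT : ∀ j, 0 ≤ z T j) (j : Fin n) : 0 ≤ z t j := by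
  have hc : ∀ l, Continuous fun s => z s l := fun l =>
    continuous_iff_continuousAt.2 fun s => (hz l s).continuousAt
  have main : ∀ ε > (0:ℝ), -(ε * (1 + (T - t))) ≤ z t j := by
    intro ε hε
    set b : ℝ → ℝ := fun s => ε * s - ε * (1 + T) with hbdef
    have hbderiv : ∀ s : ℝ, HasDerivAt b ε s := by
      intro s
      have := ((hasDerivAt_id s).const_mul ε).sub_const (ε * (1 + T))
      simp only [mul_one] at this
      exact this
    have hbcont : Continuous b := by
      apply Continuous.sub
      · exact continuous_const.mul continuous_id
      · exact continuous_const
    by_contra hcon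
    push_neg at hcon
    set S : Set ℝ := {s | s ∈ Icc t T ∧ ∃ l, z s l ≤ b s} with hSdef
    have htS : t ∈ S := by
      refine ⟨⟨le_refl t, ht⟩, j, ?_⟩
      have hbt : b t = -(ε * (1 + (T - t))) := by simp [hbdef]; ring
      rw [hbt]; linarith
    have hScl : IsClosed S := by
      have hSeq : S = Icc t T ∩ ⋃ l, {s | z s l ≤ b s} := by
        ext s; simp [hSdef, Set.mem_iUnion]
      rw [hSeq]
      exact isClosed_Icc.inter (isClosed_iUnion_of_finite fun l =>
        isClosed_le (hc l) hbcont)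
    have hScomp : IsCompact S :=
      isCompact_Icc.of_isClosed_subset hScl (fun s hs => hs.1)
    obtain ⟨u, huS, hub⟩ := hScomp.exists_isGreatest ⟨t, htS⟩
    obtain ⟨⟨hut, huT⟩, l0, hl0⟩ := huS
    have huT' : u < T := by
      rcases lt_or_eq_of_le huT with h | h
      · exact h
      · exfalso
        rw [h] at hl0
        have hbT : b T = -ε := by simp [hbdef]; ring
        rw [hbT] at hl0
        linarith [hT l0]
    have hnotS : ∀ s ∈ Ioc u T, ∀ l, b s < z s l := by
      intro s hs l
      by_contra hle
      push_neg at hle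
      have hsS : s ∈ S := ⟨⟨hut.trans hs.1.le, hs.2⟩, l, hle⟩
      exact absurd (hub hsS) (not_le.2 hs.1)
    have hge : ∀ l, b u ≤ z u l := by
      intro l
      have hev : ∀ᶠ s in 𝓝[>] u, 0 ≤ z s l - b s := by
        filter_upwards [Ioc_mem_nhdsGT_of_mem ⟨le_refl u, huT'⟩] with s hs
        exact sub_nonneg.2 (hnotS s hs l).le
      have htd : Tendsto (fun s => z s l - b s) (𝓝[>] u) (𝓝 (z u l - b u)) :=
        (((hc l).sub hbcont).continuousAt.continuousWithinAt (s := Ioi u))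
      exact sub_nonneg.1 (ge_of_tendsto htd hev)
    have hmin : ∀ l, z u l0 ≤ z u l := fun l => hl0.trans (hge l)
    have hsum : 0 ≤ ∑ l, 𝒜 u l0 l * z u l := by
      have heq : ∑ l, 𝒜 u l0 l * z u l
          = ∑ l, 𝒜 u l0 l * (z u l - z u l0) := by
        simp only [mul_sub, Finset.sum_sub_distrib, ← Finset.sum_mul, hrow,
          zero_mul, sub_zero]
      rw [heq]
      apply Finset.sum_nonneg
      intro l _
      rcases eq_or_ne l l0 with h | h
      · simp [h]
      · exact mul_nonneg (hoff u l0 l (Ne.symm h)) (sub_nonneg.2 (hmin l))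
    have hg : HasDerivAt (fun s => z s l0 - b s)
        (-(∑ l, 𝒜 u l0 l * z u l) - ε) u := (hz l0 u).sub (hbderiv u)
    have hneg : -(∑ l, 𝒜 u l0 l * z u l) - ε < 0 := by linarith
    have hslope := hasDerivAt_iff_tendsto_slope.1 hg
    have hmono : 𝓝[>] u ≤ 𝓝[≠] u :=
      nhdsWithin_mono u (fun x hx => by simpa using hx.ne')
    have hev2 : ∀ᶠ s in 𝓝[>] u, slope (fun s => z s l0 - b s) u s < 0 :=
      (hslope.mono_left hmono).eventually (eventually_lt_nhds hneg)
    obtain ⟨s, hs_slope, hsIoc⟩ :=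
      (hev2.and (Ioc_mem_nhdsGT_of_mem ⟨le_refl u, huT'⟩)).exists
    have hsu : u < s := hsIoc.1
    have hss : slope (fun s => z s l0 - b s) u s
        = ((z s l0 - b s) - (z u l0 - b u)) / (s - u) := slope_def_field _ _ _
    rw [hss] at hs_slope
    have h2 : (z s l0 - b s) - (z u l0 - b u) < 0 := by
      by_contra hge2
      push_neg at hge2
      exact absurd hs_slope (not_lt.2 (div_nonneg hge2 (by linarith)))
    have hgu : z u l0 - b u ≤ 0 := sub_nonpos.2 hl0
    have hzs : z s l0 < b s := by linarith
    exact absurd (hnotS s hsIoc l0) (not_lt.2 hzs.le)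
  by_contra hneg
  push_neg at hneg
  have hc1 : (0:ℝ) < 1 + (T - t) := by linarith
  have hε : (0:ℝ) < (-(z t j)) / (2 * (1 + (T - t))) :=
    div_pos (by linarith) (by linarith)
  have hmain := main _ hε
  have hεc : ((-(z t j)) / (2 * (1 + (T - t)))) * (1 + (T - t))
      = -(z t j) / 2 := by
    field_simp
  rw [hεc] at hmain
  linarith

/-- Applying the maximum principle to affine functions of matrix-vector
products of `Φ`. -/
private lemma key_affine {n : ℕ} (𝒜 : ℝ → Matrix (Fin n) (Fin n) ℝ)
    (hoff : ∀ t j k, j ≠ k → 0 ≤ 𝒜 t j k)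
    (hrow : ∀ t j, ∑ l, 𝒜 t j l = 0)
    (Φ : ℝ → ℝ → Matrix (Fin n) (Fin n) ℝ)
    (hΦode : ∀ T j k, ∀ t,
      HasDerivAt (fun s => Φ s T j k) (-(∑ l, 𝒜 t j l * Φ t T l k)) t)
    (T : ℝ) (c d : ℝ) (w : Fin n → ℝ) {t : ℝ} (ht : t ≤ T)
    (h0 : ∀ j, 0 ≤ c + d * ∑ k, Φ T T j k * w k) (j : Fin n) :
    0 ≤ c + d * ∑ k, Φ t T j k * w k := by
  refine key_nonneg 𝒜 hoff hrow
    (fun s j' => c + d * ∑ k, Φ s T j' k * w k) (fun j' s => ?_) ht h0 j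
  have h1 : HasDerivAt (fun s => c + d * ∑ k, Φ s T j' k * w k)
      (d * ∑ k, (-(∑ l, 𝒜 s j' l * Φ s T l k)) * w k) s :=
    ((HasDerivAt.fun_sum (fun k _ => (hΦode T j' k s).mul_const (w k))).const_mul
      d).const_add c
  convert h1 using 1
  calc -(∑ l, 𝒜 s j' l * (c + d * ∑ k, Φ s T l k * w k))
      = -(∑ l, (𝒜 s j' l * c + d * ∑ k, 𝒜 s j' l * (Φ s T l k * w k))) := by
        congr 1
        refine Finset.sum_congr rfl fun l _ => ?_
        simp only [mul_add, Finset.mul_sum]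
        congr 1
        exact Finset.sum_congr rfl fun k _ => by ring
    _ = -((∑ l, 𝒜 s j' l) * c
          + d * ∑ l, ∑ k, 𝒜 s j' l * (Φ s T l k * w k)) := by
        rw [Finset.sum_add_distrib, Finset.sum_mul, Finset.mul_sum]
    _ = -(d * ∑ k, ∑ l, 𝒜 s j' l * (Φ s T l k * w k)) := by
        rw [hrow, Finset.sum_comm]
        ring
    _ = d * ∑ k, (-(∑ l, 𝒜 s j' l * (Φ s T l k * w k))) := by
        rw [Finset.sum_neg_distrib]
        ring
    _ = d * ∑ k, (-(∑ l, 𝒜 s j' l * Φ s T l k)) * w k := by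
        congr 1
        refine Finset.sum_congr rfl fun k _ => ?_
        rw [neg_mul]
        congr 1
        rw [Finset.sum_mul]
        exact Finset.sum_congr rfl fun l _ => by ring

/-- The backward fundamental solution `Φ(t,T)` of `Ż = -𝒜(t) Z`, where each
`𝒜(t)` is a Metzler matrix with zero row sums, has nonnegative entries, rows
summing to 1, and is a sup-norm contraction. -/
theorem fundamental_solution_stochastic
    (n : ℕ) (𝒜 : ℝ → Matrix (Fin n) (Fin n) ℝ)
    (hcont : ∀ j k, Continuous fun t => 𝒜 t j k)
    (hoff : ∀ t j k, j ≠ k → 0 ≤ 𝒜 t j k)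
    (hrow : ∀ t j, ∑ l, 𝒜 t j l = 0)
    (Φ : ℝ → ℝ → Matrix (Fin n) (Fin n) ℝ)
    (hΦode : ∀ T j k, ∀ t,
      HasDerivAt (fun s => Φ s T j k) (-(∑ l, 𝒜 t j l * Φ t T l k)) t)
    (hΦinit : ∀ T, Φ T T = 1) :
    ∀ t T, t ≤ T →
      (∀ j k, 0 ≤ Φ t T j k) ∧
      (∀ j, ∑ l, Φ t T j l = 1) ∧
      (∀ W : Fin n → ℝ, ‖(Φ t T).mulVec W‖ ≤ ‖W‖) := by
  intro t T htT
  refine ⟨?_, ?_, ?_⟩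
  · intro j k
    exact key_nonneg 𝒜 hoff hrow (fun s j' => Φ s T j' k)
      (fun j' s => hΦode T j' k s) htT
      (fun j' => by
        show 0 ≤ Φ T T j' k
        rw [hΦinit]
        rcases eq_or_ne j' k with h | h <;> simp [Matrix.one_apply, h]) j
  · intro j
    have ha := key_affine 𝒜 hoff hrow Φ hΦode T (-1) 1 (fun _ => 1) htT
      (fun j' => by rw [hΦinit]; simp [Matrix.one_apply]) j
    have hb := key_affine 𝒜 hoff hrow Φ hΦode T 1 (-1) (fun _ => 1) htT
      (fun j' => by rw [hΦinit]; simp [Matrix.one_apply]) j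
    simp only [mul_one, one_mul, neg_one_mul] at ha hb
    linarith
  · intro W
    rw [pi_norm_le_iff_of_nonneg (norm_nonneg W)]
    intro j
    have hWj : ∀ j' : Fin n, |W j'| ≤ ‖W‖ := fun j' => by
      have := norm_le_pi_norm W j'
      rwa [Real.norm_eq_abs] at this
    have hinit : ∀ j' : Fin n, ∑ k, Φ T T j' k * W k = W j' := fun j' => by
      rw [hΦinit]
      simp [Matrix.one_apply, ite_mul]
    have ha := key_affine 𝒜 hoff hrow Φ hΦode T ‖W‖ (-1) W htT
      (fun j' => by rw [hinit j']; have := abs_le.1 (hWj j'); linarith) j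
    have hb := key_affine 𝒜 hoff hrow Φ hΦode T ‖W‖ 1 W htT
      (fun j' => by rw [hinit j']; have := abs_le.1 (hWj j'); linarith) j
    have hmv : (Φ t T).mulVec W j = ∑ k, Φ t T j k * W k := by
      simp [Matrix.mulVec, dotProduct]
    rw [Real.norm_eq_abs, abs_le, hmv]
    constructor <;> nlinarith [ha, hb]
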